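/- Let ε > 0, n ≥ 2, and let D ∈ ℝ^{(n−1)×n} be the forward difference operator, (Dw)_i = w_{i+1} − w_i. Define ξ : ℝⁿ → ℝ by ξ(w) = Σ_{i=1}^{n−1} log(ε + |(Dw)_i|) − (1/ε)·Σ_{i=1}^{n−1} |(Dw)_i|. Then ξ is continuously differentiable on ℝⁿ, and its gradient is ∇ξ(w) = Dᵀ·s(w), where s(w) ∈ ℝ^{n−1} has coordinates s(w)_i = (1/(ε + |(Dw)_i|) − 1/ε)·sign((Dw)_i), with sign(0) = 0. Equivalently, ∇ξ(w) = Dᵀ diag(1/(ε + |Dw|) − 1/ε) sign(Dw). -/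

import Mathlib

open Real Filter Asymptotics Topology


lemma rsign_mul_abs (t : ℝ) : Real.sign t * |t| = t := by
  rcases lt_trichotomy t 0 with h | rfl | h
  · rw [Real.sign_of_neg h, abs_of_neg h]; ring
  · simp [Real.sign_zero]
  · rw [Real.sign_of_pos h, abs_of_pos h]; ring

lemma sign_form (ε : ℝ) (hε : 0 < ε) (t : ℝ) :
    (1 / (ε + |t|) - 1 / ε) * Real.sign t = -t / (ε * (ε + |t|)) := by
  have h1 : 0 < ε + |t| := by positivity
  have h2 : (1 / (ε + |t|) - 1 / ε) = -|t| / (ε * (ε + |t|)) := by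
    rw [div_sub_div _ _ (ne_of_gt h1) (ne_of_gt hε)]
    rw [div_eq_div_iff (by positivity) (by positivity)]
    ring
  rw [h2, div_mul_eq_mul_div, neg_mul, mul_comm, rsign_mul_abs, neg_div]

lemma log_bound (ε : ℝ) (hε : 0 < ε) (x : ℝ) :
    |Real.log (ε + |x|) - Real.log ε - |x| / ε| ≤ x ^ 2 / ε ^ 2 := by
  set u : ℝ := |x| / ε with hu
  have hu0 : 0 ≤ u := by positivity
  have h1 : 0 < 1 + u := by linarith
  have hlog : Real.log (ε + |x|) - Real.log ε = Real.log (1 + u) := by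
    rw [← Real.log_div (by positivity) (ne_of_gt hε)]
    congr 1
    rw [hu]
    field_simp
  have hup : Real.log (1 + u) ≤ u := by
    have := Real.log_le_sub_one_of_pos h1
    linarith
  have hlo : u - u ^ 2 ≤ Real.log (1 + u) := by
    have h2 : Real.log (1 + u)⁻¹ ≤ (1 + u)⁻¹ - 1 :=
      Real.log_le_sub_one_of_pos (by positivity)
    rw [Real.log_inv] at h2
    have h3 : 1 - (1 + u)⁻¹ ≤ Real.log (1 + u) := by linarith
    have h5 : 1 - (1 + u)⁻¹ = u / (1 + u) := by field_simp; ring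
    rw [h5] at h3
    have h6 : u - u ^ 2 ≤ u / (1 + u) := by
      rw [le_div_iff₀ h1]; nlinarith
    linarith
  have husq : u ^ 2 = x ^ 2 / ε ^ 2 := by
    rw [hu, div_pow, sq_abs]
  rw [hlog, ← husq, abs_le]
  constructor <;> nlinarith

lemma key (ε : ℝ) (hε : 0 < ε) (t : ℝ) :
    HasDerivAt (fun x => Real.log (ε + |x|) - |x| / ε)
      ((1 / (ε + |t|) - 1 / ε) * Real.sign t) t := by
  rcases lt_trichotomy t 0 with ht | rfl | ht
  · have h1 : ε - t ≠ 0 := by nlinarith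
    have hA : HasDerivAt (fun x : ℝ => ε - x) (-1) t := (hasDerivAt_id t).const_sub ε
    have hB := (Real.hasDerivAt_log h1).comp t hA
    have hd := hB.add ((hasDerivAt_id t).div_const ε)
    have hev : (fun x => Real.log (ε + |x|) - |x| / ε) =ᶠ[𝓝 t]
        (fun x => Real.log (ε - x) + x / ε) := by
      filter_upwards [Iio_mem_nhds ht] with x hx
      rw [abs_of_neg hx, ← sub_eq_add_neg, neg_div, sub_neg_eq_add]
    have := hd.congr_of_eventuallyEq hev
    refine this.congr_deriv ?_
    rw [abs_of_neg ht, Real.sign_of_neg ht, ← sub_eq_add_neg]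
    have h2 : (0:ℝ) < ε - t := by nlinarith
    field_simp
    ring
  · rw [Real.sign_zero, mul_zero, hasDerivAt_iff_tendsto_slope]
    apply squeeze_zero_norm' (a := fun x => |x| / ε ^ 2)
    · filter_upwards [self_mem_nhdsWithin] with x hx
      have hx0 : x ≠ 0 := hx
      have hb := log_bound ε hε x
      rw [sub_right_comm] at hb
      have hf0 : Real.log (ε + |(0:ℝ)|) - |(0:ℝ)| / ε = Real.log ε := by simp
      rw [slope_def_field, hf0, sub_zero, Real.norm_eq_abs, abs_div,
        div_le_iff₀ (abs_pos.mpr hx0), div_mul_eq_mul_div, abs_mul_abs_self]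
      have hxx : x * x = x ^ 2 := by ring
      rw [hxx]; linarith
    · have h := ((continuous_abs.div_const (ε ^ 2)).tendsto 0).mono_left
        (nhdsWithin_le_nhds (s := {(0:ℝ)}ᶜ))
      simpa using h
  · have h1 : ε + t ≠ 0 := by nlinarith
    have hA : HasDerivAt (fun x : ℝ => ε + x) 1 t := (hasDerivAt_id t).const_add ε
    have hB := (Real.hasDerivAt_log h1).comp t hA
    have hd := hB.sub ((hasDerivAt_id t).div_const ε)
    have hev : (fun x => Real.log (ε + |x|) - |x| / ε) =ᶠ[𝓝 t]
        (fun x => Real.log (ε + x) - x / ε) := by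
      filter_upwards [Ioi_mem_nhds ht] with x hx
      rw [abs_of_pos hx]
    have := hd.congr_of_eventuallyEq hev
    refine this.congr_deriv ?_
    rw [abs_of_pos ht, Real.sign_of_pos ht]
    field_simp



/-- The smooth correction term
`ξ(w) = ∑_{i=1}^{n−1} log(ε + |(Dw)_i|) − (1/ε)·∑_{i=1}^{n−1} |(Dw)_i|`, where
`D` is the forward difference operator `(Dw)_i = w_{i+1} − w_i` on `ℝⁿ`,
`n = m + 2`. -/
noncomputable def xiCorrection (ε : ℝ) (m : ℕ) (w : Fin (m + 2) → ℝ) : ℝ :=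
  (∑ i : Fin (m + 1), Real.log (ε + |w i.succ - w i.castSucc|)) -
    (1 / ε) * ∑ i : Fin (m + 1), |w i.succ - w i.castSucc|

/-- The claimed gradient `∇ξ(w) = Dᵀ diag(1/(ε + |Dw|) − 1/ε) sign(Dw)`,
written coordinatewise: `(∇ξ(w))_k = (Dᵀ s(w))_k` where
`s(w)_i = (1/(ε + |(Dw)_i|) − 1/ε)·sign((Dw)_i)` (with `sign 0 = 0`). -/
noncomputable def xiGradient (ε : ℝ) (m : ℕ) (w : Fin (m + 2) → ℝ) :
    Fin (m + 2) → ℝ :=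
  fun k => ∑ i : Fin (m + 1),
    ((1 / (ε + |w i.succ - w i.castSucc|) - 1 / ε) *
        Real.sign (w i.succ - w i.castSucc)) *
      ((if i.succ = k then (1 : ℝ) else 0) - (if i.castSucc = k then (1 : ℝ) else 0))

/-- Lemma 3.7: for `ε > 0`, the correction term `ξ` is
continuously differentiable on `ℝⁿ`, with gradient
`∇ξ(w) = Dᵀ diag(1/(ε + |Dw|) − 1/ε) sign(Dw)` (here the derivative at `w` is
the continuous linear map `h ↦ ⟨∇ξ(w), h⟩`). -/
theorem xiCorrection_smooth (ε : ℝ) (hε : 0 < ε) (m : ℕ) :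
    (∀ w : Fin (m + 2) → ℝ,
        HasFDerivAt (xiCorrection ε m)
          (∑ k : Fin (m + 2), xiGradient ε m w k •
            (ContinuousLinearMap.proj k :
              (Fin (m + 2) → ℝ) →L[ℝ] ℝ)) w) ∧
      Continuous (xiGradient ε m) := by
  constructor
  · intro w
    have hxi : xiCorrection ε m = fun w : Fin (m + 2) → ℝ =>
        ∑ i : Fin (m + 1),
          (Real.log (ε + |w i.succ - w i.castSucc|) - |w i.succ - w i.castSucc| / ε) := by
      funext v
      rw [xiCorrection, Finset.mul_sum, ← Finset.sum_sub_distrib]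
      refine Finset.sum_congr rfl fun i _ => ?_
      ring
    rw [hxi]
    have hterm : ∀ i : Fin (m + 1),
        HasFDerivAt (fun v : Fin (m + 2) → ℝ =>
            Real.log (ε + |v i.succ - v i.castSucc|) - |v i.succ - v i.castSucc| / ε)
          (((1 / (ε + |w i.succ - w i.castSucc|) - 1 / ε) *
              Real.sign (w i.succ - w i.castSucc)) •
            ((ContinuousLinearMap.proj i.succ : (Fin (m + 2) → ℝ) →L[ℝ] ℝ) -
              ContinuousLinearMap.proj i.castSucc)) w := by
      intro i
      have hL : HasFDerivAt (fun v : Fin (m + 2) → ℝ => v i.succ - v i.castSucc)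
          ((ContinuousLinearMap.proj i.succ : (Fin (m + 2) → ℝ) →L[ℝ] ℝ) -
            ContinuousLinearMap.proj i.castSucc) w :=
        ((ContinuousLinearMap.proj i.succ : (Fin (m + 2) → ℝ) →L[ℝ] ℝ) -
          ContinuousLinearMap.proj i.castSucc).hasFDerivAt
      exact (key ε hε (w i.succ - w i.castSucc)).comp_hasFDerivAt w hL
    have hsum := HasFDerivAt.fun_sum (fun i (_ : i ∈ Finset.univ) => hterm i)
    refine hsum.congr_fderiv ?_
    symm
    refine ContinuousLinearMap.ext fun h => ?_
    simp only [ContinuousLinearMap.coe_sum', Finset.sum_apply,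
      ContinuousLinearMap.smul_apply, ContinuousLinearMap.proj_apply,
      ContinuousLinearMap.sub_apply, smul_eq_mul, xiGradient, Finset.sum_mul]
    rw [Finset.sum_comm]
    refine Finset.sum_congr rfl fun i _ => ?_
    simp only [sub_mul, mul_sub, mul_ite, ite_mul, mul_one, mul_zero, one_mul, zero_mul,
      Finset.sum_sub_distrib, Finset.sum_ite_eq, Finset.mem_univ, if_pos]
  · apply continuous_pi
    intro k
    simp only [xiGradient]
    apply continuous_finset_sum
    intro i _
    have hrw : (fun w : Fin (m + 2) → ℝ =>
        ((1 / (ε + |w i.succ - w i.castSucc|) - 1 / ε) *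
            Real.sign (w i.succ - w i.castSucc)) *
          ((if i.succ = k then (1 : ℝ) else 0) - (if i.castSucc = k then (1 : ℝ) else 0)))
        = fun w : Fin (m + 2) → ℝ =>
          (-(w i.succ - w i.castSucc) / (ε * (ε + |w i.succ - w i.castSucc|))) *
            ((if i.succ = k then (1 : ℝ) else 0) - (if i.castSucc = k then (1 : ℝ) else 0)) := by
      funext v
      rw [sign_form ε hε]
    rw [hrw]
    refine Continuous.mul ?_ continuous_const
    refine Continuous.div ?_ ?_ ?_
    · exact ((continuous_apply i.succ).sub (continuous_apply i.castSucc)).neg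
    · exact continuous_const.mul (continuous_const.add
        ((continuous_apply i.succ).sub (continuous_apply i.castSucc)).abs)
    · intro v; positivity
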